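/- Let J : ℝ^{2n} → M_{2n}(ℝ) be a continuous matrix-valued function with J(z)² = −id for all z. Let f : 𝔻 → ℝ^{2n} be a C¹ map on the open unit disc 𝔻 ⊂ ℂ satisfying f_x + J(f) f_y = 0 (i.e., f is J-holomorphic). Then both V = f_x and V = f_y satisfy the linearized equation D(V) := V_x + J(f)V_y + d_fJ(V) f_y = 0, where d_fJ(V)(ζ) denotes the derivative of z ↦ J(z) at f(ζ) applied to V(ζ). (Assume f and J are C².) -/

import Mathlib

open Metric

/-- If `f` is a `J`-holomorphic disc (`f_x + J(f) f_y = 0`) for an almost complex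
structure `J` (i.e. `J(z)² = -id`), then both partial derivative fields `V = f_x` and
`V = f_y` satisfy the linearized equation `V_x + J(f) V_y + (d_f J)(V) f_y = 0`. -/
theorem fx_fy_variational_fields {n : ℕ}
    (J : (Fin (2 * n) → ℝ) → ((Fin (2 * n) → ℝ) →L[ℝ] (Fin (2 * n) → ℝ)))
    (hJ2 : ∀ z, (J z).comp (J z) = -ContinuousLinearMap.id ℝ (Fin (2 * n) → ℝ))
    (hJsmooth : ContDiff ℝ 2 J)
    (f : ℂ → (Fin (2 * n) → ℝ))
    (hf : ContDiffOn ℝ 2 f (ball (0 : ℂ) 1))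
    (hJhol : ∀ ζ ∈ ball (0 : ℂ) 1,
      fderiv ℝ f ζ 1 + J (f ζ) (fderiv ℝ f ζ Complex.I) = 0) :
    (∀ ζ ∈ ball (0 : ℂ) 1,
      (fderiv ℝ (fun w => fderiv ℝ f w 1) ζ 1)
        + J (f ζ) (fderiv ℝ (fun w => fderiv ℝ f w 1) ζ Complex.I)
        + (fderiv ℝ J (f ζ) (fderiv ℝ f ζ 1)) (fderiv ℝ f ζ Complex.I) = 0) ∧
    (∀ ζ ∈ ball (0 : ℂ) 1,
      (fderiv ℝ (fun w => fderiv ℝ f w Complex.I) ζ 1)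
        + J (f ζ) (fderiv ℝ (fun w => fderiv ℝ f w Complex.I) ζ Complex.I)
        + (fderiv ℝ J (f ζ) (fderiv ℝ f ζ Complex.I)) (fderiv ℝ f ζ Complex.I) = 0) := by
  have main : ∀ ζ ∈ ball (0 : ℂ) 1,
      (∀ w : ℂ, fderiv ℝ (fderiv ℝ f) ζ w 1
          + J (f ζ) (fderiv ℝ (fderiv ℝ f) ζ w Complex.I)
          + (fderiv ℝ J (f ζ) (fderiv ℝ f ζ w)) (fderiv ℝ f ζ Complex.I) = 0)
        ∧ IsSymmSndFDerivAt ℝ f ζ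
        ∧ (∀ v : ℂ, fderiv ℝ (fun w => fderiv ℝ f w v) ζ
            = (fderiv ℝ (fderiv ℝ f) ζ).flip v) := by
    intro ζ hζ
    have hf2 : ContDiffAt ℝ 2 f ζ := hf.contDiffAt (isOpen_ball.mem_nhds hζ)
    have hF1 : ContDiffAt ℝ 1 (fderiv ℝ f) ζ := hf2.fderiv_right (le_refl 2)
    have hFd : HasFDerivAt (fderiv ℝ f) (fderiv ℝ (fderiv ℝ f) ζ) ζ :=
      (hF1.differentiableAt one_ne_zero).hasFDerivAt
    set F := fderiv ℝ f with hFdef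
    set F' := fderiv ℝ (fderiv ℝ f) ζ with hF'def
    have hsym : IsSymmSndFDerivAt ℝ f ζ := hf2.isSymmSndFDerivAt (by simp [minSmoothness_of_isRCLikeNormedField])
    -- derivative of w ↦ F w v
    have hev : ∀ v : ℂ, HasFDerivAt (fun w => F w v) (F'.flip v) ζ := by
      intro v
      have := hFd.clm_apply (hasFDerivAt_const v ζ)
      simpa using this
    have hevf : ∀ v : ℂ, fderiv ℝ (fun w => F w v) ζ = F'.flip v :=
      fun v => (hev v).fderiv
    -- derivative of w ↦ J (f w)
    have hfd : HasFDerivAt f (F ζ) ζ := (hf2.differentiableAt two_ne_zero).hasFDerivAt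
    have hJd : HasFDerivAt (fun w => J (f w)) ((fderiv ℝ J (f ζ)).comp (F ζ)) ζ :=
      (hJsmooth.differentiable two_ne_zero (f ζ)).hasFDerivAt.comp ζ hfd
    -- derivative of w ↦ J (f w) (F w I)
    have h2 := hJd.clm_apply (hev Complex.I)
    have h1 := (hev 1).add h2
    -- the function w ↦ F w 1 + J (f w) (F w I) vanishes near ζ
    have hzero : HasFDerivAt (fun w => F w 1 + J (f w) (F w Complex.I))
        (0 : ℂ →L[ℝ] (Fin (2 * n) → ℝ)) ζ := by
      have hev0 : (fun w => F w 1 + J (f w) (F w Complex.I)) =ᶠ[nhds ζ]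
          (fun _ => (0 : Fin (2 * n) → ℝ)) := by
        filter_upwards [isOpen_ball.mem_nhds hζ] with w hw using hJhol w hw
      exact (hasFDerivAt_const (0 : Fin (2 * n) → ℝ) ζ).congr_of_eventuallyEq hev0
    have hD := h1.unique hzero
    refine ⟨fun w => ?_, hsym, hevf⟩
    have := congrArg (fun L : ℂ →L[ℝ] (Fin (2 * n) → ℝ) => L w) hD
    simp only [ContinuousLinearMap.add_apply, ContinuousLinearMap.flip_apply,
      ContinuousLinearMap.comp_apply, ContinuousLinearMap.zero_apply] at this
    rw [show (0 : Fin (2 * n) → ℝ)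
        = F' w 1 + (J (f ζ) (F' w Complex.I)
          + (fderiv ℝ J (f ζ)) (F ζ w) (F ζ Complex.I)) from this.symm]
    abel
  constructor
  · intro ζ hζ
    obtain ⟨key, hsym, hevf⟩ := main ζ hζ
    rw [hevf 1]
    simp only [ContinuousLinearMap.flip_apply]
    rw [hsym Complex.I 1]
    exact key 1
  · intro ζ hζ
    obtain ⟨key, hsym, hevf⟩ := main ζ hζ
    rw [hevf Complex.I]
    simp only [ContinuousLinearMap.flip_apply]
    rw [hsym 1 Complex.I]
    exact key Complex.I
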